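/- For any m₁×m₂ real matrix C with rank(C) ≤ r, one has ‖C‖²_{L₂(Π)} ≥ (κ₁² − ρ·r)·‖C‖₂², where κ₁ = κ₁(Π) and ρ = ρ(Π). -/

import Mathlib

open MeasureTheory ProbabilityTheory Matrix Real

noncomputable section

namespace MC

instance matMeasurableSpace {m n : Type*} : MeasurableSpace (Matrix m n ℝ) :=
  inferInstanceAs (MeasurableSpace (m → n → ℝ))

/-- Trace inner product `⟨A,B⟩ = tr(Aᵀ B)`. -/
def mip {m₁ m₂ : ℕ} (A B : Matrix (Fin m₁) (Fin m₂) ℝ) : ℝ := (Aᵀ * B).trace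

/-- Frobenius norm `‖A‖₂`. -/
def frob {m₁ m₂ : ℕ} (A : Matrix (Fin m₁) (Fin m₂) ℝ) : ℝ :=
  Real.sqrt (∑ i, ∑ j, (A i j) ^ 2)

/-- Euclidean norm of a vector. -/
def evnorm {m : ℕ} (v : Fin m → ℝ) : ℝ := Real.sqrt (∑ i, (v i) ^ 2)

/-- Spectral norm `‖A‖_∞` (largest singular value), as the `ℓ₂ → ℓ₂` operator norm. -/
def spec {m₁ m₂ : ℕ} (A : Matrix (Fin m₁) (Fin m₂) ℝ) : ℝ :=
  sSup {r | ∃ x : Fin m₂ → ℝ, evnorm x ≤ 1 ∧ r = evnorm (A.mulVec x)}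

/-- Nuclear norm `‖A‖₁` (sum of singular values), via trace duality with the spectral norm. -/
def nuc {m₁ m₂ : ℕ} (A : Matrix (Fin m₁) (Fin m₂) ℝ) : ℝ :=
  sSup {r | ∃ B : Matrix (Fin m₁) (Fin m₂) ℝ, spec B ≤ 1 ∧ r = mip A B}

/-- Entrywise expectation of a random matrix. -/
def mE {Ω : Type*} [MeasurableSpace Ω] {k l : ℕ} (μ : Measure Ω)
    (Z : Ω → Matrix (Fin k) (Fin l) ℝ) : Matrix (Fin k) (Fin l) ℝ :=
  fun i j => ∫ ω, Z ω i j ∂μ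

/-- `⟨A,B⟩_{L₂(Π)} = (1/n) Σᵢ E[⟨A,Xᵢ⟩⟨B,Xᵢ⟩]`. -/
def ipL2 {Ω : Type*} [MeasurableSpace Ω] {m₁ m₂ n : ℕ} (μ : Measure Ω)
    (X : Fin n → Ω → Matrix (Fin m₁) (Fin m₂) ℝ) (A B : Matrix (Fin m₁) (Fin m₂) ℝ) : ℝ :=
  (1 / n) * ∑ i, ∫ ω, mip A (X i ω) * mip B (X i ω) ∂μ

/-- `‖A‖²_{L₂(Π)} = (1/n) Σᵢ E[⟨A,Xᵢ⟩²]`. -/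
def nl2sq {Ω : Type*} [MeasurableSpace Ω] {m₁ m₂ n : ℕ} (μ : Measure Ω)
    (X : Fin n → Ω → Matrix (Fin m₁) (Fin m₂) ℝ) (A : Matrix (Fin m₁) (Fin m₂) ℝ) : ℝ :=
  ipL2 μ X A A

/-- `κ₁(Π) = inf{‖B‖_{L₂(Π)} : ‖B‖₂ = 1, rank(B) ≤ 1}`. -/
def kappa1 {Ω : Type*} [MeasurableSpace Ω] {m₁ m₂ n : ℕ} (μ : Measure Ω)
    (X : Fin n → Ω → Matrix (Fin m₁) (Fin m₂) ℝ) : ℝ :=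
  sInf {r | ∃ B : Matrix (Fin m₁) (Fin m₂) ℝ,
    frob B = 1 ∧ B.rank ≤ 1 ∧ r = Real.sqrt (nl2sq μ X B)}

/-- The coherence `ρ(Π) = sup{|⟨A,B⟩_{L₂(Π)}| / (‖A‖₁‖B‖₁) : A,B ≠ 0, ⟨A,B⟩ = 0}`. -/
def rho {Ω : Type*} [MeasurableSpace Ω] {m₁ m₂ n : ℕ} (μ : Measure Ω)
    (X : Fin n → Ω → Matrix (Fin m₁) (Fin m₂) ℝ) : ℝ :=
  sSup {r | ∃ A B : Matrix (Fin m₁) (Fin m₂) ℝ, A ≠ 0 ∧ B ≠ 0 ∧ mip A B = 0 ∧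
    r = |ipL2 μ X A B| / (nuc A * nuc B)}

lemma mip_eq_sum (A B : Matrix (Fin m₁) (Fin m₂) ℝ) :
    mip A B = ∑ i, ∑ j, A i j * B i j := by
  unfold mip Matrix.trace
  rw [Finset.sum_comm]
  simp [Matrix.mul_apply, Matrix.diag, Matrix.transpose_apply]

lemma frob_nonneg (A : Matrix (Fin m₁) (Fin m₂) ℝ) : 0 ≤ frob A := Real.sqrt_nonneg _

lemma frob_sq (A : Matrix (Fin m₁) (Fin m₂) ℝ) : frob A ^ 2 = ∑ i, ∑ j, (A i j) ^ 2 :=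
  Real.sq_sqrt (by positivity)

lemma mip_self (A : Matrix (Fin m₁) (Fin m₂) ℝ) : mip A A = frob A ^ 2 := by
  rw [mip_eq_sum, frob_sq]; simp [sq]

lemma evnorm_nonneg (v : Fin m → ℝ) : 0 ≤ evnorm v := Real.sqrt_nonneg _

lemma evnorm_sq (v : Fin m → ℝ) : evnorm v ^ 2 = ∑ i, (v i) ^ 2 :=
  Real.sq_sqrt (by positivity)

lemma evnorm_eq_zero {v : Fin m → ℝ} (h : evnorm v = 0) : v = 0 := by
  have h2 : ∑ i, (v i) ^ 2 = 0 := by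
    have := congrArg (· ^ 2) h
    simpa [evnorm_sq] using this
  funext i
  have := (Finset.sum_eq_zero_iff_of_nonneg (fun i _ => sq_nonneg (v i))).1 h2 i (by simp)
  simpa [pow_eq_zero_iff] using this

lemma evnorm_pos {v : Fin m → ℝ} (h : v ≠ 0) : 0 < evnorm v := by
  rcases lt_or_eq_of_le (evnorm_nonneg v) with h' | h'
  · exact h'
  · exact absurd (evnorm_eq_zero h'.symm) h

lemma evnorm_smul (c : ℝ) (v : Fin m → ℝ) : evnorm (c • v) = |c| * evnorm v := by
  unfold evnorm
  rw [← Real.sqrt_sq_eq_abs, ← Real.sqrt_mul (sq_nonneg c)]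
  congr 1
  rw [Finset.mul_sum]
  simp [mul_pow]

lemma frob_pos {A : Matrix (Fin m₁) (Fin m₂) ℝ} (h : A ≠ 0) : 0 < frob A := by
  rcases lt_or_eq_of_le (frob_nonneg A) with h' | h'
  · exact h'
  · exfalso; apply h
    have h2 : ∑ i, ∑ j, (A i j) ^ 2 = 0 := by
      have := congrArg (· ^ 2) h'.symm
      simpa [frob_sq] using this
    funext i j
    have hi := (Finset.sum_eq_zero_iff_of_nonneg (fun i _ => by positivity)).1 h2 i (by simp)
    have := (Finset.sum_eq_zero_iff_of_nonneg (fun j _ => sq_nonneg (A i j))).1 hi j (by simp)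
    simpa [pow_eq_zero_iff] using this

lemma frob_smul (c : ℝ) (A : Matrix (Fin m₁) (Fin m₂) ℝ) : frob (c • A) = |c| * frob A := by
  unfold frob
  rw [← Real.sqrt_sq_eq_abs, ← Real.sqrt_mul (sq_nonneg c)]
  congr 1
  rw [Finset.mul_sum]
  refine Finset.sum_congr rfl fun i _ => ?_
  rw [Finset.mul_sum]
  simp [Matrix.smul_apply, mul_pow]

lemma dot_le (x y : Fin m → ℝ) : ∑ i, x i * y i ≤ evnorm x * evnorm y := by
  have h := Finset.sum_mul_sq_le_sq_mul_sq Finset.univ x y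
  calc ∑ i, x i * y i ≤ |∑ i, x i * y i| := le_abs_self _
    _ = Real.sqrt ((∑ i, x i * y i) ^ 2) := (Real.sqrt_sq_eq_abs _).symm
    _ ≤ Real.sqrt ((∑ i, x i ^ 2) * ∑ i, y i ^ 2) := Real.sqrt_le_sqrt h
    _ = evnorm x * evnorm y := by
        rw [Real.sqrt_mul (by positivity)]; rfl

lemma abs_dot_le (x y : Fin m → ℝ) : |∑ i, x i * y i| ≤ evnorm x * evnorm y := by
  have h := Finset.sum_mul_sq_le_sq_mul_sq Finset.univ x y
  calc |∑ i, x i * y i| = Real.sqrt ((∑ i, x i * y i) ^ 2) := (Real.sqrt_sq_eq_abs _).symm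
    _ ≤ Real.sqrt ((∑ i, x i ^ 2) * ∑ i, y i ^ 2) := Real.sqrt_le_sqrt h
    _ = evnorm x * evnorm y := by
        rw [Real.sqrt_mul (by positivity)]; rfl

lemma abs_mip_le (A B : Matrix (Fin m₁) (Fin m₂) ℝ) : |mip A B| ≤ frob A * frob B := by
  have key : mip A B = ∑ p : Fin m₁ × Fin m₂, A p.1 p.2 * B p.1 p.2 := by
    rw [mip_eq_sum, Fintype.sum_prod_type]
  have h := Finset.sum_mul_sq_le_sq_mul_sq Finset.univ
    (fun p : Fin m₁ × Fin m₂ => A p.1 p.2) (fun p => B p.1 p.2)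
  calc |mip A B| = Real.sqrt ((mip A B) ^ 2) := (Real.sqrt_sq_eq_abs _).symm
    _ ≤ Real.sqrt ((∑ p : Fin m₁ × Fin m₂, A p.1 p.2 ^ 2) * ∑ p : Fin m₁ × Fin m₂, B p.1 p.2 ^ 2) := by
        apply Real.sqrt_le_sqrt; rw [key]; exact h
    _ = frob A * frob B := by
        rw [Real.sqrt_mul (by positivity)]
        unfold frob
        rw [Fintype.sum_prod_type, Fintype.sum_prod_type]

lemma evnorm_zero : evnorm (0 : Fin m → ℝ) = 0 := by
  unfold evnorm; simp

lemma evnorm_mulVec_le_frob (A : Matrix (Fin m₁) (Fin m₂) ℝ) (x : Fin m₂ → ℝ) :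
    evnorm (A.mulVec x) ≤ frob A * evnorm x := by
  have h : evnorm (A.mulVec x) ^ 2 ≤ (frob A * evnorm x) ^ 2 := by
    rw [evnorm_sq, mul_pow, frob_sq, evnorm_sq, Finset.sum_mul]
    refine Finset.sum_le_sum fun i _ => ?_
    have := Finset.sum_mul_sq_le_sq_mul_sq Finset.univ (fun j => A i j) x
    simpa [Matrix.mulVec, dotProduct] using this
  calc evnorm (A.mulVec x) = Real.sqrt (evnorm (A.mulVec x) ^ 2) :=
        (Real.sqrt_sq (evnorm_nonneg _)).symm
    _ ≤ Real.sqrt ((frob A * evnorm x) ^ 2) := Real.sqrt_le_sqrt h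
    _ = frob A * evnorm x := Real.sqrt_sq (mul_nonneg (frob_nonneg A) (evnorm_nonneg x))

lemma specSet_zero_mem (A : Matrix (Fin m₁) (Fin m₂) ℝ) :
    (0 : ℝ) ∈ {r | ∃ x : Fin m₂ → ℝ, evnorm x ≤ 1 ∧ r = evnorm (A.mulVec x)} :=
  ⟨0, by simp [evnorm_zero], by simp [Matrix.mulVec_zero, evnorm_zero]⟩

lemma specSet_bdd (A : Matrix (Fin m₁) (Fin m₂) ℝ) :
    ∀ r ∈ {r | ∃ x : Fin m₂ → ℝ, evnorm x ≤ 1 ∧ r = evnorm (A.mulVec x)}, r ≤ frob A := by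
  rintro r ⟨x, hx, rfl⟩
  calc evnorm (A.mulVec x) ≤ frob A * evnorm x := evnorm_mulVec_le_frob A x
    _ ≤ frob A * 1 := by
        exact mul_le_mul_of_nonneg_left hx (frob_nonneg A)
    _ = frob A := mul_one _

lemma spec_nonneg (A : Matrix (Fin m₁) (Fin m₂) ℝ) : 0 ≤ spec A :=
  le_csSup ⟨frob A, fun r hr => specSet_bdd A r hr⟩ (specSet_zero_mem A)

lemma spec_le_frob (A : Matrix (Fin m₁) (Fin m₂) ℝ) : spec A ≤ frob A :=
  csSup_le ⟨0, specSet_zero_mem A⟩ (specSet_bdd A)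

lemma evnorm_mulVec_le_spec (A : Matrix (Fin m₁) (Fin m₂) ℝ) (x : Fin m₂ → ℝ) :
    evnorm (A.mulVec x) ≤ spec A * evnorm x := by
  by_cases hx : x = 0
  · simp [hx, Matrix.mulVec_zero, evnorm_zero]
  · have hpos := evnorm_pos hx
    set c := (evnorm x)⁻¹ with hc
    have hmem : evnorm (A.mulVec (c • x)) ∈
        {r | ∃ y : Fin m₂ → ℝ, evnorm y ≤ 1 ∧ r = evnorm (A.mulVec y)} := by
      refine ⟨c • x, ?_, rfl⟩
      rw [hc, evnorm_smul, abs_of_nonneg (le_of_lt (inv_pos.mpr hpos)),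
        inv_mul_cancel₀ (ne_of_gt hpos)]
    have hle : evnorm (A.mulVec (c • x)) ≤ spec A :=
      le_csSup ⟨frob A, fun r hr => specSet_bdd A r hr⟩ hmem
    rw [Matrix.mulVec_smul, evnorm_smul,
      abs_of_nonneg (le_of_lt (inv_pos.mpr hpos))] at hle
    have h2 := mul_le_mul_of_nonneg_right hle (le_of_lt hpos)
    have h3 : (evnorm x)⁻¹ * evnorm (A.mulVec x) * evnorm x = evnorm (A.mulVec x) := by
      field_simp
    rw [h3] at h2; exact h2

lemma spec_zero : spec (0 : Matrix (Fin m₁) (Fin m₂) ℝ) = 0 := by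
  refine le_antisymm ?_ (spec_nonneg 0)
  have h := spec_le_frob (0 : Matrix (Fin m₁) (Fin m₂) ℝ)
  have h0 : frob (0 : Matrix (Fin m₁) (Fin m₂) ℝ) = 0 := by unfold frob; simp
  rw [h0] at h; exact h

lemma nucSet_zero_mem (A : Matrix (Fin m₁) (Fin m₂) ℝ) :
    (0 : ℝ) ∈ {r | ∃ B : Matrix (Fin m₁) (Fin m₂) ℝ, spec B ≤ 1 ∧ r = mip A B} :=
  ⟨0, by rw [spec_zero]; norm_num, by rw [mip_eq_sum]; simp⟩

lemma frob_le_card_mul_spec (B : Matrix (Fin m₁) (Fin m₂) ℝ) :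
    frob B ≤ Real.sqrt m₂ * spec B := by
  have h : frob B ^ 2 ≤ (m₂ : ℝ) * spec B ^ 2 := by
    rw [frob_sq, Finset.sum_comm]
    have hcol : ∀ j : Fin m₂, ∑ i, B i j ^ 2 ≤ spec B ^ 2 := by
      intro j
      have h1 : B.mulVec (Pi.single j 1) = fun i => B i j := by
        funext i
        simp [Matrix.mulVec, dotProduct, Pi.single_apply]
      have h2 : evnorm (Pi.single j (1:ℝ) : Fin m₂ → ℝ) = 1 := by
        unfold evnorm
        have : ∑ i, ((Pi.single j (1:ℝ) : Fin m₂ → ℝ) i)^2 = 1 := by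
          simp [Pi.single_apply]
        rw [this]
        exact Real.sqrt_one
      have := evnorm_mulVec_le_spec B (Pi.single j (1:ℝ))
      rw [h1, h2, mul_one] at this
      have hsq := mul_self_le_mul_self (evnorm_nonneg (fun i => B i j)) this
      calc ∑ i, B i j ^ 2 = evnorm (fun i => B i j) ^ 2 := (evnorm_sq _).symm
        _ ≤ spec B ^ 2 := by rw [sq, sq]; exact hsq
    calc ∑ j, ∑ i, B i j ^ 2 ≤ ∑ _j : Fin m₂, spec B ^ 2 := Finset.sum_le_sum fun j _ => hcol j
      _ = (m₂ : ℝ) * spec B ^ 2 := by simp [mul_comm]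
  calc frob B = Real.sqrt (frob B ^ 2) := (Real.sqrt_sq (frob_nonneg _)).symm
    _ ≤ Real.sqrt ((m₂ : ℝ) * spec B ^ 2) := Real.sqrt_le_sqrt h
    _ = Real.sqrt m₂ * spec B := by
        rw [Real.sqrt_mul (by positivity), Real.sqrt_sq (spec_nonneg _)]

lemma nucSet_bdd (A : Matrix (Fin m₁) (Fin m₂) ℝ) :
    ∀ r ∈ {r | ∃ B : Matrix (Fin m₁) (Fin m₂) ℝ, spec B ≤ 1 ∧ r = mip A B},
      r ≤ frob A * Real.sqrt m₂ := by
  rintro r ⟨B, hB, rfl⟩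
  calc mip A B ≤ |mip A B| := le_abs_self _
    _ ≤ frob A * frob B := abs_mip_le A B
    _ ≤ frob A * (Real.sqrt m₂ * spec B) :=
        mul_le_mul_of_nonneg_left (frob_le_card_mul_spec B) (frob_nonneg A)
    _ ≤ frob A * (Real.sqrt m₂ * 1) := by
        refine mul_le_mul_of_nonneg_left ?_ (frob_nonneg A)
        exact mul_le_mul_of_nonneg_left hB (Real.sqrt_nonneg _)
    _ = frob A * Real.sqrt m₂ := by ring

lemma nuc_nonneg (A : Matrix (Fin m₁) (Fin m₂) ℝ) : 0 ≤ nuc A :=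
  le_csSup ⟨frob A * Real.sqrt m₂, fun r hr => nucSet_bdd A r hr⟩ (nucSet_zero_mem A)

lemma frob_le_nuc (A : Matrix (Fin m₁) (Fin m₂) ℝ) : frob A ≤ nuc A := by
  by_cases hA : A = 0
  · have : frob A = 0 := by rw [hA]; unfold frob; simp
    rw [this]; exact nuc_nonneg A
  · have hpos := frob_pos hA
    set B := (frob A)⁻¹ • A with hB
    have hspec : spec B ≤ 1 := by
      calc spec B ≤ frob B := spec_le_frob B
        _ = 1 := by
            rw [hB, frob_smul, abs_of_nonneg (le_of_lt (inv_pos.mpr hpos)),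
              inv_mul_cancel₀ (ne_of_gt hpos)]
    have hmip : mip A B = frob A := by
      have : mip A B = (frob A)⁻¹ * mip A A := by
        rw [mip_eq_sum, mip_eq_sum, Finset.mul_sum]
        refine Finset.sum_congr rfl fun i _ => ?_
        rw [Finset.mul_sum]
        refine Finset.sum_congr rfl fun j _ => ?_
        simp [hB, Matrix.smul_apply]; ring
      rw [this, mip_self]
      field_simp
    have : frob A ∈ {r | ∃ B : Matrix (Fin m₁) (Fin m₂) ℝ, spec B ≤ 1 ∧ r = mip A B} :=
      ⟨B, hspec, hmip.symm⟩
    exact le_csSup ⟨frob A * Real.sqrt m₂, fun r hr => nucSet_bdd A r hr⟩ this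

lemma nuc_rankone_le (w : Fin m₁ → ℝ) (v : Fin m₂ → ℝ) :
    nuc (Matrix.of fun i j => w i * v j) ≤ evnorm w * evnorm v := by
  refine csSup_le ⟨0, nucSet_zero_mem _⟩ ?_
  rintro r ⟨B, hB, rfl⟩
  have key : mip (Matrix.of fun i j => w i * v j) B = ∑ i, w i * (B.mulVec v) i := by
    rw [mip_eq_sum]
    refine Finset.sum_congr rfl fun i _ => ?_
    rw [Matrix.mulVec, dotProduct, Finset.mul_sum]
    refine Finset.sum_congr rfl fun j _ => ?_
    simp [Matrix.of_apply]; ring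
  calc mip (Matrix.of fun i j => w i * v j) B = ∑ i, w i * (B.mulVec v) i := key
    _ ≤ evnorm w * evnorm (B.mulVec v) := dot_le _ _
    _ ≤ evnorm w * (spec B * evnorm v) :=
        mul_le_mul_of_nonneg_left (evnorm_mulVec_le_spec B v) (evnorm_nonneg w)
    _ ≤ evnorm w * (1 * evnorm v) := by
        refine mul_le_mul_of_nonneg_left ?_ (evnorm_nonneg w)
        exact mul_le_mul_of_nonneg_right hB (evnorm_nonneg v)
    _ = evnorm w * evnorm v := by ring

lemma frob_rankone (w : Fin m₁ → ℝ) (v : Fin m₂ → ℝ) :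
    frob (Matrix.of fun i j => w i * v j) = evnorm w * evnorm v := by
  unfold frob evnorm
  rw [← Real.sqrt_mul (by positivity)]
  congr 1
  rw [Finset.sum_mul]
  refine Finset.sum_congr rfl fun i _ => ?_
  rw [Finset.mul_sum]
  refine Finset.sum_congr rfl fun j _ => ?_
  simp [Matrix.of_apply, mul_pow]


lemma frob_zero : frob (0 : Matrix (Fin m₁) (Fin m₂) ℝ) = 0 := by
  unfold frob; simp

lemma mip_comm (A B : Matrix (Fin m₁) (Fin m₂) ℝ) : mip A B = mip B A := by
  rw [mip_eq_sum, mip_eq_sum]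
  exact Finset.sum_congr rfl fun i _ => Finset.sum_congr rfl fun j _ => mul_comm _ _

lemma mip_smul_left (c : ℝ) (A M : Matrix (Fin m₁) (Fin m₂) ℝ) :
    mip (c • A) M = c * mip A M := by
  rw [mip_eq_sum, mip_eq_sum, Finset.mul_sum]
  refine Finset.sum_congr rfl fun i _ => ?_
  rw [Finset.mul_sum]
  refine Finset.sum_congr rfl fun j _ => ?_
  simp [Matrix.smul_apply]; ring

lemma mip_sum_left {ι : Type*} (s : Finset ι) (D : ι → Matrix (Fin m₁) (Fin m₂) ℝ)
    (M : Matrix (Fin m₁) (Fin m₂) ℝ) :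
    mip (∑ k ∈ s, D k) M = ∑ k ∈ s, mip (D k) M := by
  simp only [mip_eq_sum, Matrix.sum_apply, Finset.sum_mul]
  rw [show (∑ i, ∑ j, ∑ k ∈ s, D k i j * M i j) = ∑ i, ∑ k ∈ s, ∑ j, D k i j * M i j from
    Finset.sum_congr rfl fun i _ => Finset.sum_comm]
  exact Finset.sum_comm

def stdE (a : Fin m₁) (b : Fin m₂) : Matrix (Fin m₁) (Fin m₂) ℝ :=
  Matrix.of fun i j => if i = a ∧ j = b then 1 else 0

lemma mip_stdE (a : Fin m₁) (b : Fin m₂) (M : Matrix (Fin m₁) (Fin m₂) ℝ) :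
    mip (stdE a b) M = M a b := by
  rw [mip_eq_sum]
  unfold stdE
  rw [Finset.sum_eq_single a]
  · rw [Finset.sum_eq_single b]
    · simp
    · intro j _ hj; simp [hj]
    · simp
  · intro i _ hi
    apply Finset.sum_eq_zero
    intro j _
    simp [hi]
  · simp

section Meas
variable {Ω : Type*} [MeasurableSpace Ω] {n : ℕ} (μ : Measure Ω)
  (X : Fin n → Ω → Matrix (Fin m₁) (Fin m₂) ℝ)
  (hInt : ∀ (i : Fin n) (A B : Matrix (Fin m₁) (Fin m₂) ℝ),
      Integrable (fun ω => mip A (X i ω) * mip B (X i ω)) μ)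

lemma nl2sq_nonneg (A : Matrix (Fin m₁) (Fin m₂) ℝ) : 0 ≤ nl2sq μ X A := by
  unfold nl2sq ipL2
  apply mul_nonneg (by positivity)
  refine Finset.sum_nonneg fun i _ => integral_nonneg fun ω => mul_self_nonneg _

lemma nl2sq_smul (c : ℝ) (A : Matrix (Fin m₁) (Fin m₂) ℝ) :
    nl2sq μ X (c • A) = c ^ 2 * nl2sq μ X A := by
  unfold nl2sq ipL2
  have h : ∀ i : Fin n, (∫ ω, mip (c • A) (X i ω) * mip (c • A) (X i ω) ∂μ)
      = c ^ 2 * ∫ ω, mip A (X i ω) * mip A (X i ω) ∂μ := by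
    intro i
    rw [← integral_const_mul]
    refine integral_congr_ae (Filter.Eventually.of_forall fun ω => ?_)
    simp only [mip_smul_left]
    ring
  simp only [h, Finset.mul_sum]
  exact Finset.sum_congr rfl fun i _ => by ring

include hInt in
lemma nl2sq_sum {ι : Type*} (s : Finset ι)
    (D : ι → Matrix (Fin m₁) (Fin m₂) ℝ) :
    nl2sq μ X (∑ k ∈ s, D k) = ∑ k ∈ s, ∑ l ∈ s, ipL2 μ X (D k) (D l) := by
  unfold nl2sq ipL2
  have h1 : ∀ i : Fin n, ∫ ω, mip (∑ k ∈ s, D k) (X i ω) * mip (∑ k ∈ s, D k) (X i ω) ∂μ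
      = ∑ k ∈ s, ∑ l ∈ s, ∫ ω, mip (D k) (X i ω) * mip (D l) (X i ω) ∂μ := by
    intro i
    have hpt : ∀ ω, mip (∑ k ∈ s, D k) (X i ω) * mip (∑ k ∈ s, D k) (X i ω)
        = ∑ k ∈ s, ∑ l ∈ s, mip (D k) (X i ω) * mip (D l) (X i ω) := by
      intro ω
      rw [mip_sum_left, Finset.sum_mul_sum]
    rw [integral_congr_ae (Filter.Eventually.of_forall hpt),
      integral_finset_sum s (fun k _ => integrable_finset_sum s (fun l _ => hInt i (D k) (D l)))]
    exact Finset.sum_congr rfl fun k _ =>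
      integral_finset_sum s (fun l _ => hInt i (D k) (D l))
  simp only [h1]
  simp only [Finset.mul_sum]
  rw [Finset.sum_comm]
  exact Finset.sum_congr rfl fun k _ => Finset.sum_comm

include hInt in
lemma intH (i : Fin n) :
    Integrable (fun ω => ∑ a, ∑ b, (X i ω a b) ^ 2) μ := by
  have : ∀ (a : Fin m₁) (b : Fin m₂),
      Integrable (fun ω => (X i ω a b) ^ 2) μ := by
    intro a b
    have h := hInt i (stdE a b) (stdE a b)
    simp only [mip_stdE] at h
    simpa [sq] using h
  exact integrable_finset_sum _ fun a _ => integrable_finset_sum _ fun b _ => this a _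

include hInt in
lemma abs_ipL2_le (A B : Matrix (Fin m₁) (Fin m₂) ℝ) :
    |ipL2 μ X A B| ≤ frob A * frob B *
      ((1 / n) * ∑ i, ∫ ω, ∑ a, ∑ b, (X i ω a b) ^ 2 ∂μ) := by
  unfold ipL2
  rw [abs_mul, abs_of_nonneg (by positivity : (0:ℝ) ≤ 1 / n)]
  have hre : frob A * frob B * ((1 / (n:ℝ)) * ∑ i, ∫ ω, ∑ a, ∑ b, (X i ω a b) ^ 2 ∂μ)
      = (1 / (n:ℝ)) * ∑ i, (frob A * frob B * ∫ ω, ∑ a, ∑ b, (X i ω a b) ^ 2 ∂μ) := by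
    simp only [Finset.mul_sum]
    exact Finset.sum_congr rfl fun i _ => by ring
  rw [hre]
  refine mul_le_mul_of_nonneg_left ?_ (by positivity)
  calc |∑ i, ∫ ω, mip A (X i ω) * mip B (X i ω) ∂μ|
      ≤ ∑ i, |∫ ω, mip A (X i ω) * mip B (X i ω) ∂μ| := Finset.abs_sum_le_sum_abs _ _
    _ ≤ ∑ i, (frob A * frob B * ∫ ω, ∑ a, ∑ b, (X i ω a b) ^ 2 ∂μ) := by
        refine Finset.sum_le_sum fun i _ => ?_
        calc |∫ ω, mip A (X i ω) * mip B (X i ω) ∂μ|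
            ≤ ∫ ω, |mip A (X i ω) * mip B (X i ω)| ∂μ := by
              simpa [abs_mul] using norm_integral_le_integral_norm (μ := μ)
                (f := fun ω => mip A (X i ω) * mip B (X i ω))
          _ ≤ ∫ ω, frob A * frob B * (∑ a, ∑ b, (X i ω a b) ^ 2) ∂μ := by
              refine integral_mono (hInt i A B).abs ((intH μ X hInt i).const_mul _) ?_
              intro ω
              calc |mip A (X i ω) * mip B (X i ω)|
                  = |mip A (X i ω)| * |mip B (X i ω)| := abs_mul _ _
                _ ≤ (frob A * frob (X i ω)) * (frob B * frob (X i ω)) :=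
                    mul_le_mul (abs_mip_le _ _) (abs_mip_le _ _) (abs_nonneg _)
                      (mul_nonneg (frob_nonneg _) (frob_nonneg _))
                _ = frob A * frob B * (frob (X i ω) ^ 2) := by ring
                _ = frob A * frob B * (∑ a, ∑ b, (X i ω a b) ^ 2) := by rw [frob_sq]
          _ = frob A * frob B * ∫ ω, (∑ a, ∑ b, (X i ω a b) ^ 2) ∂μ :=
              integral_const_mul _ _

include hInt in
lemma rho_bddAbove : BddAbove {r | ∃ A B : Matrix (Fin m₁) (Fin m₂) ℝ,
    A ≠ 0 ∧ B ≠ 0 ∧ mip A B = 0 ∧ r = |ipL2 μ X A B| / (nuc A * nuc B)} := by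
  set K := (1 / (n:ℝ)) * ∑ i, ∫ ω, ∑ a, ∑ b, (X i ω a b) ^ 2 ∂μ with hK
  have hK0 : 0 ≤ K := by
    apply mul_nonneg (by positivity)
    exact Finset.sum_nonneg fun i _ => integral_nonneg fun ω => by positivity
  refine ⟨K, ?_⟩
  rintro r ⟨A, B, hA, hB, -, rfl⟩
  have hNA : 0 < nuc A := lt_of_lt_of_le (frob_pos hA) (frob_le_nuc A)
  have hNB : 0 < nuc B := lt_of_lt_of_le (frob_pos hB) (frob_le_nuc B)
  rw [div_le_iff₀ (mul_pos hNA hNB)]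
  calc |ipL2 μ X A B| ≤ frob A * frob B * K := abs_ipL2_le μ X hInt A B
    _ ≤ nuc A * nuc B * K := by
        refine mul_le_mul_of_nonneg_right ?_ hK0
        exact mul_le_mul (frob_le_nuc A) (frob_le_nuc B) (frob_nonneg B) (le_of_lt hNA)
    _ = K * (nuc A * nuc B) := by ring

lemma rho_nonneg : 0 ≤ rho μ X := by
  refine Real.sSup_nonneg ?_
  rintro r ⟨A, B, _, _, _, rfl⟩
  exact div_nonneg (abs_nonneg _) (mul_nonneg (nuc_nonneg A) (nuc_nonneg B))

lemma kappa1_nonneg : 0 ≤ kappa1 μ X := by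
  refine Real.sInf_nonneg ?_
  rintro r ⟨B, _, _, rfl⟩
  exact Real.sqrt_nonneg _

end Meas
lemma linearIndependent_of_orthogonal {ι : Type*} [Fintype ι] (w : ι → (Fin m → ℝ))
    (hnz : ∀ k, w k ≠ 0) (horth : ∀ k l, k ≠ l → ∑ i, w k i * w l i = 0) :
    LinearIndependent ℝ w := by
  rw [Fintype.linearIndependent_iff]
  intro g hg k₀
  have hdot := congrArg (fun z : Fin m → ℝ => ∑ i, z i * w k₀ i) hg
  simp only [Finset.sum_apply, Pi.smul_apply, smul_eq_mul, Finset.sum_mul, Pi.zero_apply,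
    zero_mul] at hdot
  rw [Finset.sum_comm] at hdot
  have hsimp : ∀ k, ∑ i, g k * w k i * w k₀ i = g k * ∑ i, w k i * w k₀ i := by
    intro k
    rw [Finset.mul_sum]
    exact Finset.sum_congr rfl fun i _ => by ring
  simp only [hsimp] at hdot
  rw [Finset.sum_eq_single k₀] at hdot
  · have hpos : 0 < ∑ i, w k₀ i * w k₀ i := by
      have h2 : 0 < (∑ i, (w k₀ i) ^ 2) := Real.sqrt_pos.mp (evnorm_pos (hnz k₀))
      calc (0:ℝ) < ∑ i, (w k₀ i)^2 := h2
        _ = ∑ i, w k₀ i * w k₀ i := by simp [sq]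
    rw [Finset.sum_const_zero] at hdot
    rcases mul_eq_zero.mp hdot with h | h
    · exact h
    · exact absurd h (ne_of_gt hpos)
  · intro k _ hk
    rw [horth k k₀ hk, mul_zero]
  · simp

lemma rank_outer_le_one (w : Fin m₁ → ℝ) (v : Fin m₂ → ℝ) :
    (Matrix.of fun i j => w i * v j : Matrix (Fin m₁) (Fin m₂) ℝ).rank ≤ 1 := by
  classical
  unfold Matrix.rank
  have hle : LinearMap.range (Matrix.of fun i j => w i * v j :
      Matrix (Fin m₁) (Fin m₂) ℝ).mulVecLin ≤ Submodule.span ℝ {w} := by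
    rintro y ⟨x, rfl⟩
    have : (Matrix.of fun i j => w i * v j : Matrix (Fin m₁) (Fin m₂) ℝ).mulVecLin x
        = (∑ j, v j * x j) • w := by
      funext i
      simp only [Matrix.mulVecLin_apply, Matrix.mulVec, dotProduct, Matrix.of_apply,
        Pi.smul_apply, smul_eq_mul, Finset.sum_mul]
      exact Finset.sum_congr rfl fun j _ => by ring
    rw [this]
    exact Submodule.smul_mem _ _ (Submodule.mem_span_singleton_self w)
  calc Module.finrank ℝ (LinearMap.range (Matrix.of fun i j => w i * v j :
        Matrix (Fin m₁) (Fin m₂) ℝ).mulVecLin)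
      ≤ Module.finrank ℝ (Submodule.span ℝ {w}) := Submodule.finrank_mono hle
    _ ≤ 1 := by
        refine (finrank_span_le_card _).trans ?_
        simp

/-- for every matrix `C` with `rank(C) ≤ r`,
`‖C‖²_{L₂(Π)} ≥ (κ₁² - ρ r) ‖C‖₂²`. -/
theorem nl2sq_lower_of_rank_le {m₁ m₂ n : ℕ} (hn : 0 < n)
    {Ω : Type*} [MeasurableSpace Ω] (μ : Measure Ω) [IsProbabilityMeasure μ]
    (X : Fin n → Ω → Matrix (Fin m₁) (Fin m₂) ℝ)
    (hmeas : ∀ i, Measurable (X i))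
    (hInt : ∀ (i : Fin n) (A B : Matrix (Fin m₁) (Fin m₂) ℝ),
      Integrable (fun ω => mip A (X i ω) * mip B (X i ω)) μ)
    (r : ℕ) (C : Matrix (Fin m₁) (Fin m₂) ℝ) (hrank : C.rank ≤ r) :
    ((kappa1 μ X) ^ 2 - rho μ X * r) * (frob C) ^ 2 ≤ nl2sq μ X C := by
  classical
  have hG : (Cᵀ * C).IsHermitian := by
    have := Matrix.isHermitian_conjTranspose_mul_self C
    simpa [Matrix.conjTranspose_eq_transpose_of_trivial] using this
  set v : Fin m₂ → (Fin m₂ → ℝ) := fun k => ⇑(hG.eigenvectorBasis k) with hv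
  have hon := hG.eigenvectorBasis.orthonormal
  rw [orthonormal_iff_ite] at hon
  have hvon : ∀ k l, (∑ j, v k j * v l j) = if k = l then 1 else 0 := by
    intro k l
    have h := hon k l
    simp only [PiLp.inner_apply, RCLike.inner_apply, conj_trivial] at h
    simpa [hv, mul_comm] using h
  have hmv : ∀ k, (Cᵀ * C) *ᵥ v k = hG.eigenvalues k • v k := fun k =>
    hG.mulVec_eigenvectorBasis k
  set w : Fin m₂ → (Fin m₁ → ℝ) := fun k => C.mulVec (v k) with hw
  have hCexp : ∀ i j, C i j = ∑ k, w k i * v k j := by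
    intro i j
    have hx := hG.eigenvectorBasis.sum_repr'
      ((WithLp.equiv 2 (Fin m₂ → ℝ)).symm (fun j' => C i j'))
    have hj := congrArg (fun x : EuclideanSpace ℝ (Fin m₂) => x j) hx
    simp only [WithLp.equiv_symm_apply, PiLp.toLp_apply] at hj
    rw [← hj, WithLp.ofLp_sum, Finset.sum_apply]
    refine Finset.sum_congr rfl fun k _ => ?_
    simp only [PiLp.inner_apply, RCLike.inner_apply, conj_trivial, hw, Matrix.mulVec,
      dotProduct, PiLp.smul_apply, smul_eq_mul, hv]
  have hwdot : ∀ k l, k ≠ l → ∑ i', w k i' * w l i' = 0 := by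
    intro k l hkl
    have h3 : (C.mulVec (v k)) ⬝ᵥ (C.mulVec (v l)) = v k ⬝ᵥ ((Cᵀ * C) *ᵥ v l) := by
      rw [← Matrix.mulVec_mulVec,
        show v k ⬝ᵥ (Cᵀ *ᵥ (C *ᵥ v l)) = (v k ᵥ* Cᵀ) ⬝ᵥ (C *ᵥ v l) from
          dotProduct_mulVec _ _ _,
        Matrix.vecMul_transpose]
    have h4 : ∑ i', w k i' * w l i'
        = (C.mulVec (v k)) ⬝ᵥ (C.mulVec (v l)) := rfl
    have h5 := hvon k l
    rw [if_neg hkl] at h5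
    rw [h4, h3, hmv l, dotProduct_smul]
    have h6 : v k ⬝ᵥ v l = 0 := h5
    rw [h6]
    simp
  have hvnorm : ∀ k, evnorm (v k) = 1 := by
    intro k
    have h := hvon k k
    rw [if_pos rfl] at h
    unfold evnorm
    rw [show (∑ j, v k j ^ 2) = ∑ j, v k j * v k j from by simp [sq], h]
    exact Real.sqrt_one
  set D : Fin m₂ → Matrix (Fin m₁) (Fin m₂) ℝ :=
    fun k => Matrix.of fun i j => w k i * v k j with hD
  have hC : C = ∑ k, D k := by
    ext i j
    rw [Matrix.sum_apply]
    exact hCexp i j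
  set S : Finset (Fin m₂) := Finset.univ.filter (fun k => w k ≠ 0) with hS
  have hmemS : ∀ k, k ∈ S ↔ w k ≠ 0 := by
    intro k; rw [hS]; simp
  have hDzero : ∀ k, w k = 0 → D k = 0 := by
    intro k hk
    show (Matrix.of fun i j => w k i * v k j) = 0
    ext i j
    simp [hk]
  have hCS : C = ∑ k ∈ S, D k := by
    rw [hC]
    symm
    apply Finset.sum_subset (Finset.subset_univ S)
    intro k _ hk
    rw [hmemS] at hk
    push_neg at hk
    exact hDzero k hk
  have hcard : (S.card : ℝ) ≤ (r : ℝ) := by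
    have hli : LinearIndependent ℝ (fun k : {x // x ∈ S} => w k) := by
      apply linearIndependent_of_orthogonal
      · intro k
        exact (hmemS k).mp k.2
      · intro k l hkl
        exact hwdot k l (fun h => hkl (Subtype.ext h))
    have h1 : (Submodule.span ℝ (Set.range fun k : {x // x ∈ S} => w k)) ≤
        LinearMap.range C.mulVecLin := by
      rw [Submodule.span_le]
      rintro y ⟨k, rfl⟩
      exact ⟨v k, rfl⟩
    have h2 := Submodule.finrank_mono h1
    rw [finrank_span_eq_card hli] at h2
    have h3 : S.card ≤ C.rank := by
      rw [Matrix.rank]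
      simpa [Fintype.card_coe] using h2
    exact_mod_cast h3.trans hrank
  set f : Fin m₂ → ℝ := fun k => evnorm (w k) with hf
  have hfpos : ∀ k ∈ S, 0 < f k := by
    intro k hk
    exact evnorm_pos ((hmemS k).mp hk)
  have hfrobD : ∀ k, frob (D k) = f k := by
    intro k
    show frob (Matrix.of fun i j => w k i * v k j) = f k
    rw [frob_rankone, hvnorm k, mul_one]
  have hmipD : ∀ k l, mip (D k) (D l) = (∑ i', w k i' * w l i') * (∑ j, v k j * v l j) := by
    intro k l
    rw [show D k = Matrix.of fun i j => w k i * v k j from rfl,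
        show D l = Matrix.of fun i j => w l i * v l j from rfl, mip_eq_sum, Finset.sum_mul_sum]
    refine Finset.sum_congr rfl fun i _ => Finset.sum_congr rfl fun j _ => ?_
    simp only [Matrix.of_apply]
    ring
  have hmipDdiag : ∀ k ∈ S, mip (D k) (D k) = f k ^ 2 := by
    intro k _
    rw [hmipD k k]
    have h1 := hvon k k
    rw [if_pos rfl] at h1
    rw [h1, mul_one]
    have h2 : (∑ i', w k i' * w k i') = ∑ i', (w k i') ^ 2 := by simp [sq]
    rw [h2, hf]
    exact (evnorm_sq (w k)).symm
  have hfrobC : frob C ^ 2 = ∑ k ∈ S, f k ^ 2 := by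
    have hm : mip C C = ∑ k ∈ S, ∑ l ∈ S, mip (D k) (D l) := by
      rw [hCS, mip_sum_left]
      refine Finset.sum_congr rfl fun k _ => ?_
      rw [mip_comm, mip_sum_left]
      exact Finset.sum_congr rfl fun l _ => mip_comm _ _
    rw [← mip_self, hm]
    refine Finset.sum_congr rfl fun k hk => ?_
    rw [Finset.sum_eq_single k]
    · exact hmipDdiag k hk
    · intro l _ hlk
      rw [hmipD k l, hwdot k l (fun h => hlk h.symm), zero_mul]
    · intro hks
      exact absurd hk hks
  have hdecomp : nl2sq μ X C = (∑ k ∈ S, nl2sq μ X (D k)) +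
      ∑ k ∈ S, ∑ l ∈ S.erase k, ipL2 μ X (D k) (D l) := by
    rw [hCS, nl2sq_sum μ X hInt, ← Finset.sum_add_distrib]
    refine Finset.sum_congr rfl fun k hk => ?_
    rw [← Finset.add_sum_erase S (fun l => ipL2 μ X (D k) (D l)) hk]
    rfl
  have hdiag : ∀ k ∈ S, kappa1 μ X ^ 2 * f k ^ 2 ≤ nl2sq μ X (D k) := by
    intro k hk
    have hfk := hfpos k hk
    set B := (f k)⁻¹ • D k with hB
    have hfrobB : frob B = 1 := by
      rw [hB, frob_smul, hfrobD, abs_of_nonneg (le_of_lt (inv_pos.mpr hfk)),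
        inv_mul_cancel₀ (ne_of_gt hfk)]
    have hrankB : B.rank ≤ 1 := by
      have hBo : B = Matrix.of fun i j => ((f k)⁻¹ * w k i) * v k j := by
        rw [hB, show D k = Matrix.of fun i j => w k i * v k j from rfl]
        ext i j
        simp only [Matrix.smul_apply, Matrix.of_apply, smul_eq_mul]
        ring
      rw [hBo]
      exact rank_outer_le_one _ _
    have hble : kappa1 μ X ≤ Real.sqrt (nl2sq μ X B) := by
      unfold kappa1
      refine csInf_le ⟨0, ?_⟩ ⟨B, hfrobB, hrankB, rfl⟩
      rintro x ⟨B', _, _, rfl⟩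
      exact Real.sqrt_nonneg _
    have hk2 : kappa1 μ X ^ 2 ≤ nl2sq μ X B := by
      have h := pow_le_pow_left₀ (kappa1_nonneg μ X) hble 2
      rwa [Real.sq_sqrt (nl2sq_nonneg μ X B)] at h
    have hnlB : nl2sq μ X B = (f k)⁻¹ ^ 2 * nl2sq μ X (D k) := by
      rw [hB, nl2sq_smul]
    have h := mul_le_mul_of_nonneg_right hk2 (le_of_lt (pow_pos hfk 2))
    rw [hnlB] at h
    calc kappa1 μ X ^ 2 * f k ^ 2 ≤ (f k)⁻¹ ^ 2 * nl2sq μ X (D k) * f k ^ 2 := h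
      _ = nl2sq μ X (D k) := by
          field_simp
  have hDne : ∀ k ∈ S, D k ≠ 0 := by
    intro k hk h0
    have h1 := hfrobD k
    rw [h0, frob_zero] at h1
    exact absurd h1.symm (ne_of_gt (hfpos k hk))
  have hnucD : ∀ k ∈ S, 0 < nuc (D k) := by
    intro k hk
    calc (0:ℝ) < frob (D k) := by rw [hfrobD]; exact hfpos k hk
      _ ≤ nuc (D k) := frob_le_nuc _
  have hnucDle : ∀ k, nuc (D k) ≤ f k := by
    intro k
    have h := nuc_rankone_le (w k) (v k)
    rw [hvnorm k, mul_one] at h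
    exact h
  have hoff : ∀ k ∈ S, ∀ l ∈ S.erase k, -(rho μ X * (f k * f l)) ≤ ipL2 μ X (D k) (D l) := by
    intro k hk l hl
    have hlk : l ≠ k := Finset.ne_of_mem_erase hl
    have hlS : l ∈ S := Finset.mem_of_mem_erase hl
    have hmip0 : mip (D k) (D l) = 0 := by
      rw [hmipD k l, hwdot k l (fun h => hlk h.symm), zero_mul]
    have hble : |ipL2 μ X (D k) (D l)| / (nuc (D k) * nuc (D l)) ≤ rho μ X := by
      unfold rho
      exact le_csSup (rho_bddAbove μ X hInt)
        ⟨D k, D l, hDne k hk, hDne l hlS, hmip0, rfl⟩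
    have habs : |ipL2 μ X (D k) (D l)| ≤ rho μ X * (nuc (D k) * nuc (D l)) := by
      rw [div_le_iff₀ (mul_pos (hnucD k hk) (hnucD l hlS))] at hble
      linarith
    have habs2 : |ipL2 μ X (D k) (D l)| ≤ rho μ X * (f k * f l) := by
      refine habs.trans (mul_le_mul_of_nonneg_left ?_ (rho_nonneg μ X))
      exact mul_le_mul (hnucDle k) (hnucDle l) (nuc_nonneg _) (le_of_lt (hfpos k hk))
    linarith [neg_abs_le (ipL2 μ X (D k) (D l))]
  -- assemble
  set κ := kappa1 μ X with hκ
  set ρ := rho μ X with hρ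
  set F : ℝ := ∑ k ∈ S, f k ^ 2 with hF
  have hF0 : 0 ≤ F := Finset.sum_nonneg fun k _ => sq_nonneg _
  have h1 : ∑ k ∈ S, κ ^ 2 * f k ^ 2 ≤ ∑ k ∈ S, nl2sq μ X (D k) :=
    Finset.sum_le_sum hdiag
  have e1 : κ ^ 2 * F = ∑ k ∈ S, κ ^ 2 * f k ^ 2 := Finset.mul_sum _ _ _
  have h2 : ∑ k ∈ S, ∑ l ∈ S.erase k, -(ρ * (f k * f l))
      ≤ ∑ k ∈ S, ∑ l ∈ S.erase k, ipL2 μ X (D k) (D l) :=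
    Finset.sum_le_sum fun k hk => Finset.sum_le_sum fun l hl => hoff k hk l hl
  have e2 : ∑ k ∈ S, ∑ l ∈ S.erase k, -(ρ * (f k * f l))
      = -(ρ * ∑ k ∈ S, ∑ l ∈ S.erase k, f k * f l) := by
    rw [Finset.mul_sum, ← Finset.sum_neg_distrib]
    refine Finset.sum_congr rfl fun k _ => ?_
    rw [Finset.mul_sum, ← Finset.sum_neg_distrib]
  have hTT : (∑ k ∈ S, f k) * (∑ k ∈ S, f k)
      = F + ∑ k ∈ S, ∑ l ∈ S.erase k, f k * f l := by
    rw [Finset.sum_mul_sum, hF, ← Finset.sum_add_distrib]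
    refine Finset.sum_congr rfl fun k hk => ?_
    rw [← Finset.add_sum_erase S (fun l => f k * f l) hk, sq]
  have hT2 : (∑ k ∈ S, f k) ^ 2 ≤ (S.card : ℝ) * F := by
    have := sq_sum_le_card_mul_sum_sq (s := S) (f := f)
    simpa [hF] using this
  have hoffsum : ∑ k ∈ S, ∑ l ∈ S.erase k, f k * f l ≤ (r : ℝ) * F := by
    have h3 : ∑ k ∈ S, ∑ l ∈ S.erase k, f k * f l = (∑ k ∈ S, f k) ^ 2 - F := by
      rw [sq, hTT]; ring
    rw [h3]
    have h4 : (S.card : ℝ) * F ≤ (r : ℝ) * F := mul_le_mul_of_nonneg_right hcard hF0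
    linarith
  have h5 : ρ * (∑ k ∈ S, ∑ l ∈ S.erase k, f k * f l) ≤ ρ * ((r : ℝ) * F) :=
    mul_le_mul_of_nonneg_left hoffsum (rho_nonneg μ X)
  have final : κ ^ 2 * F - ρ * ((r : ℝ) * F) ≤ nl2sq μ X C := by
    rw [hdecomp]
    linarith
  calc (κ ^ 2 - ρ * (r : ℝ)) * frob C ^ 2 = κ ^ 2 * F - ρ * ((r : ℝ) * F) := by
        rw [hfrobC]; ring
    _ ≤ nl2sq μ X C := final

end MC
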